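/- Let n ≥ 1 and let W be an n×n real symmetric matrix with nonnegative entries and zero diagonal such that the weighted graph determined by W is connected, and let L(W) = diag(d) − W be the weighted graph Laplacian, where d_i = Σ_j W_{ij}. Let D be an n×n diagonal matrix with nonnegative diagonal entries, at least one of which is strictly positive. Then L(W) + D is symmetric positive definite; in particular it is invertible and all of its eigenvalues are strictly positive. -/

import Mathlib

open scoped Matrix

noncomputable section

/-- The weighted graph determined by a symmetric nonnegative weight matrix `W` is
connected: any two distinct vertices are joined by a path of positive-weight edges. -/
def WeightConnected {n : ℕ} (W : Matrix (Fin n) (Fin n) ℝ) : Prop :=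
  ∀ i j : Fin n, i ≠ j → ∃ (k : ℕ) (v : Fin (k + 1) → Fin n),
    v 0 = i ∧ v (Fin.last k) = j ∧ ∀ t : Fin k, 0 < W (t.castSucc |> v) (t.succ |> v)

/-- The weighted graph Laplacian `L(W) = diag(d) − W`, `d_i = Σ_j W_{ij}`. -/
def graphLaplacian {n : ℕ} (W : Matrix (Fin n) (Fin n) ℝ) : Matrix (Fin n) (Fin n) ℝ :=
  Matrix.diagonal (fun i => ∑ j, W i j) - W

/-- For a connected weighted graph on `n ≥ 1` vertices with Laplacian
`L(W)` and a nonnegative diagonal matrix `D` with at least one strictly positive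
entry, the matrix `L(W) + D` is symmetric positive definite; in particular it is
invertible and all its eigenvalues are strictly positive. -/

lemma quadform_aux15 {n : ℕ} (W : Matrix (Fin n) (Fin n) ℝ) (hsymm : W.IsSymm)
    (x : Fin n → ℝ) :
    x ⬝ᵥ (graphLaplacian W).mulVec x
      = (1/2) * ∑ i, ∑ j, W i j * (x i - x j)^2 := by
  have hswap : ∑ i, ∑ j, W i j * (x j)^2 = ∑ i, ∑ j, W i j * (x i)^2 := by
    rw [Finset.sum_comm]
    exact Finset.sum_congr rfl fun i _ => Finset.sum_congr rfl fun j _ => by rw [hsymm.apply]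
  simp only [graphLaplacian, dotProduct, Matrix.mulVec, Matrix.sub_apply,
    Matrix.diagonal_apply, dotProduct]
  have h1 : ∀ i, (∑ j, ((if i = j then ∑ k, W i k else 0) - W i j) * x j)
      = (∑ j, W i j) * x i - ∑ j, W i j * x j := by
    intro i
    rw [show (∑ j, ((if i = j then ∑ k, W i k else 0) - W i j) * x j)
        = ∑ j, ((if i = j then (∑ k, W i k) * x j else 0) - W i j * x j) from
      Finset.sum_congr rfl fun j _ => by split <;> ring,
      Finset.sum_sub_distrib, Finset.sum_ite_eq Finset.univ i (fun j => (∑ k, W i k) * x j)]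
    simp
  simp only [h1]
  have expand : ∀ i j : Fin n, W i j * (x i - x j)^2
      = W i j * (x i)^2 + W i j * (x j)^2 - 2 * (W i j * (x i * x j)) := by
    intro i j; ring
  simp only [expand, Finset.sum_sub_distrib, Finset.sum_add_distrib, hswap,
    ← Finset.mul_sum]
  have h2 : ∀ i, x i * ((∑ j, W i j) * x i - ∑ j, W i j * x j)
      = (∑ j, W i j * (x i)^2) - ∑ j, W i j * (x i * x j) := by
    intro i
    rw [← Finset.sum_sub_distrib, mul_sub, mul_comm (x i), mul_assoc, Finset.sum_mul,
      Finset.mul_sum, ← Finset.sum_sub_distrib]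
    exact Finset.sum_congr rfl fun j _ => by ring
  simp only [h2, Finset.sum_sub_distrib]
  ring

lemma key_aux15 {n : ℕ} (W : Matrix (Fin n) (Fin n) ℝ) (hsymm : W.IsSymm)
    (hnonneg : ∀ i j, 0 ≤ W i j)
    (hconn : ∀ i j : Fin n, i ≠ j → ∃ (k : ℕ) (v : Fin (k + 1) → Fin n),
      v 0 = i ∧ v (Fin.last k) = j ∧ ∀ t : Fin k, 0 < W (t.castSucc |> v) (t.succ |> v))
    (d : Fin n → ℝ) (hd : ∀ i, 0 ≤ d i) (hd' : ∃ i, 0 < d i)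
    (x : Fin n → ℝ) (hx : x ≠ 0) :
    0 < x ⬝ᵥ (graphLaplacian W + Matrix.diagonal d).mulVec x := by
  have hform : x ⬝ᵥ (graphLaplacian W + Matrix.diagonal d).mulVec x
      = (1/2) * (∑ i, ∑ j, W i j * (x i - x j)^2) + ∑ i, d i * (x i)^2 := by
    rw [Matrix.add_mulVec, dotProduct_add, quadform_aux15 W hsymm]
    congr 1
    simp [Matrix.mulVec_diagonal, dotProduct]
    exact Finset.sum_congr rfl fun i _ => by ring
  have hA : 0 ≤ ∑ i, ∑ j, W i j * (x i - x j)^2 :=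
    Finset.sum_nonneg fun i _ => Finset.sum_nonneg fun j _ =>
      mul_nonneg (hnonneg i j) (sq_nonneg _)
  have hB : 0 ≤ ∑ i, d i * (x i)^2 :=
    Finset.sum_nonneg fun i _ => mul_nonneg (hd i) (sq_nonneg _)
  have hA2 : 0 ≤ (1/2 : ℝ) * (∑ i, ∑ j, W i j * (x i - x j)^2) := by linarith
  rw [hform]
  rcases lt_or_eq_of_le (add_nonneg hA2 hB) with h | h
  · exact h
  exfalso
  -- the form is zero, so each piece vanishes
  have hA0 : ∑ i, ∑ j, W i j * (x i - x j)^2 = 0 := by nlinarith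
  have hB0 : ∑ i, d i * (x i)^2 = 0 := by nlinarith
  have hterm : ∀ i j : Fin n, W i j * (x i - x j)^2 = 0 := by
    intro i j
    have h1 := (Finset.sum_eq_zero_iff_of_nonneg (fun i _ => Finset.sum_nonneg fun j _ =>
      mul_nonneg (hnonneg i j) (sq_nonneg _))).1 hA0 i (Finset.mem_univ i)
    exact (Finset.sum_eq_zero_iff_of_nonneg (fun j _ =>
      mul_nonneg (hnonneg i j) (sq_nonneg _))).1 h1 j (Finset.mem_univ j)
  have hedge : ∀ i j : Fin n, 0 < W i j → x i = x j := by
    intro i j hw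
    have := hterm i j
    have h2 : (x i - x j)^2 = 0 := by
      rcases mul_eq_zero.1 this with h | h
      · exact absurd h hw.ne'
      · exact h
    have := pow_eq_zero_iff (n := 2) (by norm_num) |>.1 h2
    linarith
  obtain ⟨i0, hi0⟩ := hd'
  have hx0 : x i0 = 0 := by
    have := (Finset.sum_eq_zero_iff_of_nonneg (fun i _ =>
      mul_nonneg (hd i) (sq_nonneg _))).1 hB0 i0 (Finset.mem_univ i0)
    have h2 : (x i0)^2 = 0 := by
      rcases mul_eq_zero.1 this with h | h
      · exact absurd h hi0.ne'
      · exact h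
    have := pow_eq_zero_iff (n := 2) (by norm_num) |>.1 h2
    linarith
  apply hx
  funext i
  show x i = 0
  by_cases hii : i = i0
  · rw [hii]; exact hx0
  obtain ⟨k, v, hv0, hvl, hve⟩ := hconn i i0 hii
  have hpath : ∀ t : Fin (k + 1), x (v t) = x (v 0) := by
    intro t
    induction t using Fin.induction with
    | zero => rfl
    | succ t ih => rw [← hedge (v t.castSucc) (v t.succ) (hve t)]; exact ih
  have := hpath (Fin.last k)
  rw [hvl, hv0] at this
  rw [← this, hx0]

theorem laplacian_plus_diagonal_posDef (n : ℕ) (hn : 1 ≤ n)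
    (W : Matrix (Fin n) (Fin n) ℝ) (hsymm : W.IsSymm)
    (hnonneg : ∀ i j, 0 ≤ W i j) (hdiag : ∀ i, W i i = 0)
    (hconn : WeightConnected W)
    (d : Fin n → ℝ) (hd : ∀ i, 0 ≤ d i) (hd' : ∃ i, 0 < d i) :
    (graphLaplacian W + Matrix.diagonal d).PosDef ∧
      IsUnit (graphLaplacian W + Matrix.diagonal d) ∧
      ∀ (μ : ℝ) (v : Fin n → ℝ), v ≠ 0 →
        (graphLaplacian W + Matrix.diagonal d).mulVec v = μ • v → 0 < μ := by
  have hherm : (graphLaplacian W + Matrix.diagonal d).IsHermitian := by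
    refine Matrix.IsHermitian.add (Matrix.IsHermitian.sub (Matrix.isHermitian_diagonal _) ?_)
      (Matrix.isHermitian_diagonal _)
    rw [Matrix.IsHermitian, Matrix.conjTranspose]
    ext i j
    simpa using hsymm.apply i j
  have hpd : (graphLaplacian W + Matrix.diagonal d).PosDef := by
    refine Matrix.PosDef.of_dotProduct_mulVec_pos hherm fun x hx => ?_
    simpa using key_aux15 W hsymm hnonneg hconn d hd hd' x hx
  refine ⟨hpd, hpd.isUnit, fun μ v hv hmv => ?_⟩
  have h1 : 0 < v ⬝ᵥ (graphLaplacian W + Matrix.diagonal d).mulVec v := by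
    simpa using hpd.dotProduct_mulVec_pos hv
  rw [hmv, dotProduct_smul] at h1
  have h2 : 0 < v ⬝ᵥ v := by
    have := Matrix.dotProduct_self_star_pos_iff.2 hv
    simpa using this
  simp only [smul_eq_mul] at h1
  nlinarith
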